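/- arXiv:1612.09107 — 2 statements merged into one kernel-verified Lean document; each statement's English description precedes it below -/
import Mathlib

section
/- In the root system of gl(n,ℂ) with weights ε_i − ε_j (i ≠ j), suppose α₁, …, α_r are pairwise distinct elements of {ε_i − ε_j : 1 ≤ i ≠ j ≤ n} with r ≤ n − 1 and α₁ + ⋯ + α_r = (n−1)ε₁ − ε₂ − ⋯ − ε_n. Then r = n − 1 and {α₁,…,α_r} = {ε₁ − ε₂, ε₁ − ε₃, …, ε₁ − ε_n}. -/
/-- If `α₁, …, α_r` are pairwise distinct roots `ε_i − ε_j` of `gl(n,ℂ)` with `r ≤ n − 1`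
and sum `(n−1)ε₁ − ε₂ − ⋯ − ε_n`, then `r = n − 1` and the set of roots is
`{ε₁ − ε_j : 2 ≤ j ≤ n}`. -/
theorem stmt_8 (n : ℕ) (hn : 2 ≤ n) (S : Finset (Fin n → ℤ))
    (hroots : ∀ v ∈ S, ∃ i j : Fin n, i ≠ j ∧ v = Pi.single i 1 - Pi.single j 1)
    (hcard : S.card ≤ n - 1)
    (hsum : (∑ v ∈ S, v) =
      fun k : Fin n => if k = (⟨0, by omega⟩ : Fin n) then (n : ℤ) - 1 else -1) :
    S.card = n - 1 ∧
      S = (Finset.univ.filter fun j : Fin n => j ≠ (⟨0, by omega⟩ : Fin n)).image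
            (fun j => Pi.single (⟨0, by omega⟩ : Fin n) 1 - Pi.single j 1) := by
  have h0 : 0 < n := by omega
  set e0 : Fin n := ⟨0, h0⟩ with he0
  have key : ∀ v ∈ S, v e0 ≤ 1 := by
    intro v hv
    obtain ⟨i, j, hij, rfl⟩ := hroots v hv
    simp only [Pi.sub_apply, Pi.single_apply]
    split_ifs <;> omega
  have hsum0 : ∑ v ∈ S, v e0 = (n : ℤ) - 1 := by
    have := congrFun hsum e0
    simpa [Finset.sum_apply] using this
  clear hsum
  have hge : (n : ℤ) - 1 ≤ S.card := by
    calc (n:ℤ) - 1 = ∑ v ∈ S, v e0 := hsum0.symm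
    _ ≤ ∑ v ∈ S, 1 := Finset.sum_le_sum key
    _ = S.card := by simp
  have hcard' : S.card = n - 1 := by clear hsum0; omega
  have hall : ∀ v ∈ S, v e0 = 1 := by
    intro v hv
    by_contra h
    have hv1 : v e0 ≤ 0 := by
      clear hsum0 hge
      obtain ⟨i, j, hij, rfl⟩ := hroots v hv
      simp only [Pi.sub_apply, Pi.single_apply] at h ⊢
      split_ifs at h ⊢ <;> omega
    have hsplit : ∑ w ∈ S, w e0 = v e0 + ∑ w ∈ S.erase v, w e0 :=
      (Finset.add_sum_erase _ _ hv).symm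
    have hle : ∑ w ∈ S.erase v, w e0 ≤ ((S.erase v).card : ℤ) := by
      calc ∑ w ∈ S.erase v, w e0 ≤ ∑ w ∈ S.erase v, 1 :=
        Finset.sum_le_sum (fun w hw => key w (Finset.mem_of_mem_erase hw))
      _ = (S.erase v).card := by simp
    have hkey2 : (n : ℤ) - 1 ≤ v e0 + ((S.erase v).card : ℤ) := by
      rw [← hsum0, hsplit]; exact add_le_add le_rfl hle
    have hc : (S.erase v).card = S.card - 1 := Finset.card_erase_of_mem hv
    have hSpos : 1 ≤ S.card := Finset.card_pos.mpr ⟨v, hv⟩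
    clear hsum0 hge hsplit hle
    omega
  clear hsum0 hge
  refine ⟨hcard', ?_⟩
  have hsub : S ⊆ (Finset.univ.filter fun j : Fin n => j ≠ e0).image
      (fun j : Fin n => (Pi.single e0 1 - Pi.single j 1 : Fin n → ℤ)) := by
    intro v hv
    obtain ⟨i, j, hij, rfl⟩ := hroots v hv
    have h1 := hall _ hv
    simp only [Pi.sub_apply, Pi.single_apply] at h1
    have hi0 : i = e0 := by split_ifs at h1 <;> first | assumption | omega
    have hj0 : j ≠ e0 := fun hje => hij (hi0.trans hje.symm)
    subst hi0
    refine Finset.mem_image.mpr ⟨j, ?_, ?_⟩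
    · simp [hj0]
    · rfl
  have hinj : Set.InjOn (fun j : Fin n => (Pi.single e0 1 - Pi.single j 1 : Fin n → ℤ))
      ↑(Finset.univ.filter fun j : Fin n => j ≠ e0) := by
    intro a _ b _ hab
    by_contra hne
    have h2 := congrFun hab b
    simp only [Pi.sub_apply, Pi.single_apply] at h2
    have hba : ¬ (b = a) := fun hh => hne hh.symm
    split_ifs at h2 <;> omega
  have hTcard : ((Finset.univ.filter fun j : Fin n => j ≠ e0).image
      (fun j : Fin n => (Pi.single e0 1 - Pi.single j 1 : Fin n → ℤ))).card = n - 1 := by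
    rw [Finset.card_image_of_injOn hinj]
    simp [Finset.filter_ne', Finset.card_erase_of_mem]
  exact Finset.eq_of_subset_of_card_le hsub (by rw [hTcard, hcard'])
end

section
/- Suppose α₁, …, α_r are pairwise distinct elements of {ε_i − ε_j : 1 ≤ i ≠ j ≤ n} with r ≤ n(n−1)/2 and α₁ + ⋯ + α_r = (n−1, n−3, …, 3−n, 1−n) ∈ ℤⁿ. Then r = n(n−1)/2 and {α₁,…,α_r} = {ε_i − ε_j : 1 ≤ i < j ≤ n}. -/
open Finset

lemma root_inj {n : ℕ} {i j i' j' : Fin n} (hij : i ≠ j)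
    (h : (Pi.single i 1 - Pi.single j 1 : Fin n → ℤ) = Pi.single i' 1 - Pi.single j' 1) :
    i = i' ∧ j = j' := by
  have h1 := congrFun h i
  have h2 := congrFun h j
  simp [Pi.single_apply] at h1 h2
  constructor
  · by_contra hii
    simp [hij, Ne.symm hii] at h1
    split_ifs at h1 <;> omega
  · by_contra hjj
    simp [hij.symm, Ne.symm hjj] at h2
    split_ifs at h2 <;> omega

lemma F_root {n : ℕ} (i j : Fin n) :
    (∑ k : Fin n, (-((k:ℕ):ℤ)) * (Pi.single i 1 - Pi.single j 1 : Fin n → ℤ) k)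
      = ((j:ℕ):ℤ) - ((i:ℕ):ℤ) := by
  simp [Pi.single_apply, mul_sub, Finset.sum_sub_distrib, mul_ite]
  ring

lemma F_sum {n : ℕ} {ι : Type*} (A : Finset ι) (f : ι → Fin n → ℤ) :
    ∑ a ∈ A, ∑ k : Fin n, (-((k:ℕ):ℤ)) * f a k
      = ∑ k : Fin n, (-((k:ℕ):ℤ)) * (∑ a ∈ A, f a) k := by
  rw [Finset.sum_comm]
  simp [Finset.sum_apply, Finset.mul_sum]

-- sum of all positive roots
lemma sum_pos_roots {n : ℕ} :
    (∑ p ∈ (Finset.univ.filter fun p : Fin n × Fin n => p.1 < p.2),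
        (Pi.single p.1 1 - Pi.single p.2 1 : Fin n → ℤ))
      = fun k : Fin n => (n : ℤ) - 1 - 2 * ((k : ℕ) : ℤ) := by
  funext k
  rw [Finset.sum_apply]
  have : ∀ p : Fin n × Fin n,
      (Pi.single p.1 1 - Pi.single p.2 1 : Fin n → ℤ) k
        = (if p.1 = k then 1 else 0) - (if p.2 = k then 1 else 0) := by
    intro p; simp [Pi.single_apply, eq_comm]
  simp_rw [this, Finset.sum_sub_distrib]
  rw [Finset.sum_boole, Finset.sum_boole, Finset.filter_filter, Finset.filter_filter]
  have h1 : Finset.filter (fun p : Fin n × Fin n => p.1 < p.2 ∧ p.1 = k) univ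
      = (Ioi k).image (fun j => (k, j)) := by
    ext p
    simp only [mem_filter, mem_univ, true_and, mem_image, mem_Ioi, Prod.ext_iff]
    constructor
    · rintro ⟨h, rfl⟩; exact ⟨p.2, h, rfl, rfl⟩
    · rintro ⟨j, hj, rfl, rfl⟩; exact ⟨hj, rfl⟩
  have h2 : Finset.filter (fun p : Fin n × Fin n => p.1 < p.2 ∧ p.2 = k) univ
      = (Iio k).image (fun i => (i, k)) := by
    ext p
    simp only [mem_filter, mem_univ, true_and, mem_image, mem_Iio, Prod.ext_iff]
    constructor
    · rintro ⟨h, rfl⟩; exact ⟨p.1, h, rfl, rfl⟩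
    · rintro ⟨i, hi, rfl, rfl⟩; exact ⟨hi, rfl⟩
  rw [h1, h2, Finset.card_image_of_injective _ (fun a b h => (Prod.ext_iff.mp h).2),
    Finset.card_image_of_injective _ (fun a b h => (Prod.ext_iff.mp h).1),
    Fin.card_Ioi, Fin.card_Iio]
  have hk := k.is_lt
  omega

lemma card_pos_roots {n : ℕ} :
    (Finset.univ.filter fun p : Fin n × Fin n => p.1 < p.2).card = n * (n - 1) / 2 := by
  have hswap : (Finset.univ.filter fun p : Fin n × Fin n => p.1 < p.2).card
      = (Finset.univ.filter fun p : Fin n × Fin n => p.2 < p.1).card := by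
    apply Finset.card_bij' (fun p _ => (p.2, p.1)) (fun p _ => (p.2, p.1)) <;>
      simp +contextual
  have hunion : (Finset.univ.filter fun p : Fin n × Fin n => p.1 < p.2)
        ∪ (Finset.univ.filter fun p : Fin n × Fin n => p.2 < p.1)
      = Finset.univ.filter fun p : Fin n × Fin n => p.1 ≠ p.2 := by
    rw [← Finset.filter_or]
    apply Finset.filter_congr
    intro p _
    constructor
    · rintro (h | h) <;> [exact h.ne; exact h.ne']
    · exact fun h => lt_or_gt_of_ne h
  have hdisj : Disjoint (Finset.univ.filter fun p : Fin n × Fin n => p.1 < p.2)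
      (Finset.univ.filter fun p : Fin n × Fin n => p.2 < p.1) := by
    rw [Finset.disjoint_filter]
    intro p _ h h'
    exact absurd h' (asymm h)
  have hdiag : (Finset.univ.filter fun p : Fin n × Fin n => p.1 = p.2).card = n := by
    have : (Finset.univ.filter fun p : Fin n × Fin n => p.1 = p.2)
        = Finset.univ.image (fun i : Fin n => (i, i)) := by
      ext p
      simp only [Finset.mem_filter, Finset.mem_univ, true_and, Finset.mem_image,
        Prod.ext_iff]
      constructor
      · intro h; exact ⟨p.1, rfl, h⟩
      · rintro ⟨i, h1, h2⟩; rw [← h1, ← h2]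
    rw [this, Finset.card_image_of_injective _ (fun a b h => (Prod.ext_iff.mp h).1)]
    simp
  have hne : (Finset.univ.filter fun p : Fin n × Fin n => p.1 ≠ p.2).card = n * n - n := by
    have h := Finset.card_filter_add_card_filter_not
      (s := (Finset.univ : Finset (Fin n × Fin n))) (p := fun p => p.1 = p.2)
    simp only [hdiag] at h
    have huniv : (Finset.univ : Finset (Fin n × Fin n)).card = n * n := by simp
    have : (Finset.univ.filter fun p : Fin n × Fin n => ¬ p.1 = p.2).card = n * n - n := by
      omega
    convert this using 2
  have hcard2 := Finset.card_union_of_disjoint hdisj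
  rw [hunion, hne, ← hswap] at hcard2
  have hmul : n * (n - 1) = n * n - n := by rw [Nat.mul_sub, mul_one]
  omega


set_option maxHeartbeats 1000000 in
/-- If `α₁, …, α_r` are pairwise distinct roots `ε_i − ε_j` of `gl(n,ℂ)` with
`r ≤ n(n−1)/2` and sum `(n−1, n−3, …, 1−n)`, then `r = n(n−1)/2` and the set of roots is
the set of all positive roots `{ε_i − ε_j : i < j}`. -/
theorem stmt_9 (n : ℕ) (hn : 2 ≤ n) (S : Finset (Fin n → ℤ))
    (hroots : ∀ v ∈ S, ∃ i j : Fin n, i ≠ j ∧ v = Pi.single i 1 - Pi.single j 1)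
    (hcard : S.card ≤ n * (n - 1) / 2)
    (hsum : (∑ v ∈ S, v) = fun k : Fin n => (n : ℤ) - 1 - 2 * ((k : ℕ) : ℤ)) :
    S.card = n * (n - 1) / 2 ∧
      S = (Finset.univ.filter fun p : Fin n × Fin n => p.1 < p.2).image
            (fun p => Pi.single p.1 1 - Pi.single p.2 1) := by
  classical
  set root : Fin n × Fin n → (Fin n → ℤ) :=
    fun p => Pi.single p.1 1 - Pi.single p.2 1 with hroot
  set P := (Finset.univ.filter fun p : Fin n × Fin n => p.1 < p.2) with hPdef
  set T := Finset.univ.filter (fun p : Fin n × Fin n => p.1 ≠ p.2 ∧ root p ∈ S) with hTdef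
  set g : Fin n × Fin n → ℤ := fun p => ((p.2 : ℕ) : ℤ) - ((p.1 : ℕ) : ℤ) with hgdef
  have hTne : ∀ p ∈ T, p.1 ≠ p.2 := by
    intro p hp; rw [hTdef, Finset.mem_filter] at hp; exact hp.2.1
  have hST : S = T.image root := by
    ext v
    simp only [Finset.mem_image, hTdef, Finset.mem_filter, Finset.mem_univ, true_and]
    constructor
    · intro hv
      obtain ⟨i, j, hij, hv'⟩ := hroots v hv
      refine ⟨(i, j), ⟨hij, ?_⟩, hv'.symm⟩
      show (Pi.single i 1 - Pi.single j 1 : Fin n → ℤ) ∈ S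
      exact hv' ▸ hv
    · rintro ⟨p, ⟨_, hp⟩, rfl⟩; exact hp
  have hinj : ∀ p ∈ T, ∀ q ∈ T, root p = root q → p = q := by
    intro p hp q hq h
    obtain ⟨h1, h2⟩ := root_inj (hTne p hp) h
    exact Prod.ext h1 h2
  -- F over T equals F over P
  have hFroot : ∀ p : Fin n × Fin n,
      (∑ k : Fin n, (-((k:ℕ):ℤ)) * root p k) = g p := fun p => F_root p.1 p.2
  have hFS : ∑ p ∈ T, g p
      = ∑ k : Fin n, (-((k:ℕ):ℤ)) * ((n : ℤ) - 1 - 2 * ((k : ℕ) : ℤ)) := by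
    calc ∑ p ∈ T, g p = ∑ p ∈ T, ∑ k : Fin n, (-((k:ℕ):ℤ)) * root p k := by
          simp_rw [hFroot]
      _ = ∑ v ∈ T.image root, ∑ k : Fin n, (-((k:ℕ):ℤ)) * v k :=
          (Finset.sum_image (g := root) (s := T) (f := fun v : Fin n → ℤ => ∑ k : Fin n, (-((k:ℕ):ℤ)) * v k) hinj).symm
      _ = ∑ v ∈ S, ∑ k : Fin n, (-((k:ℕ):ℤ)) * v k := by rw [← hST]
      _ = ∑ k : Fin n, (-((k:ℕ):ℤ)) * (∑ v ∈ S, v) k := F_sum S _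
      _ = _ := by rw [hsum]
  have hFP : ∑ p ∈ P, g p
      = ∑ k : Fin n, (-((k:ℕ):ℤ)) * ((n : ℤ) - 1 - 2 * ((k : ℕ) : ℤ)) := by
    calc ∑ p ∈ P, g p = ∑ p ∈ P, ∑ k : Fin n, (-((k:ℕ):ℤ)) * root p k := by
          simp_rw [hFroot]
      _ = ∑ k : Fin n, (-((k:ℕ):ℤ)) * (∑ p ∈ P, root p) k := F_sum P root
      _ = _ := by rw [hroot, hPdef, sum_pos_roots]
  have hTP : ∑ p ∈ T, g p = ∑ p ∈ P, g p := hFS.trans hFP.symm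
  -- split into intersections and differences
  have hsT := Finset.sum_inter_add_sum_sdiff T P g
  have hsP := Finset.sum_inter_add_sum_sdiff P T g
  rw [Finset.inter_comm] at hsP
  have hkey : ∑ p ∈ T \ P, g p = ∑ p ∈ P \ T, g p := by omega
  have hB : ∑ p ∈ T \ P, g p ≤ -((T \ P).card : ℤ) := by
    have := Finset.sum_le_card_nsmul (T \ P) g (-1) ?_
    · simpa using this
    · intro p hp
      rw [Finset.mem_sdiff] at hp
      have h1 := hTne p hp.1
      have h2 : ¬ p.1 < p.2 := by
        have := hp.2; rw [hPdef, Finset.mem_filter] at this; simpa using this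
      have h3 : p.2 < p.1 := lt_of_le_of_ne (le_of_not_gt h2) (Ne.symm h1)
      have h4 : (p.2 : ℕ) < (p.1 : ℕ) := h3
      simp only [hgdef]; omega
  have hC : ((P \ T).card : ℤ) ≤ ∑ p ∈ P \ T, g p := by
    have := Finset.card_nsmul_le_sum (P \ T) g 1 ?_
    · simpa using this
    · intro p hp
      rw [Finset.mem_sdiff, hPdef, Finset.mem_filter] at hp
      have h4 : (p.1 : ℕ) < (p.2 : ℕ) := hp.1.2
      simp only [hgdef]; omega
  have hBzero : (T \ P).card = 0 ∧ (P \ T).card = 0 := by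
    constructor <;> omega
  have hTeqP : T = P := by
    have h1 : T ⊆ P := by
      rw [← Finset.sdiff_eq_empty_iff_subset]
      exact Finset.card_eq_zero.mp hBzero.1
    have h2 : P ⊆ T := by
      rw [← Finset.sdiff_eq_empty_iff_subset]
      exact Finset.card_eq_zero.mp hBzero.2
    exact Finset.Subset.antisymm h1 h2
  constructor
  · rw [hST, Finset.card_image_of_injOn hinj, hTeqP, hPdef]
    exact card_pos_roots
  · rw [hST, hTeqP]
end
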